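/- The Malcev monoid, i.e., the monoid presented by ⟨a, b, c, d, a', b', c', d' | ab = cd, a'b' = c'd', a'd = c'b⟩, is residually finite: for any two distinct elements x, y there exist a finite monoid F and a monoid homomorphism f to F with f(x) ≠ f(y). -/

import Mathlib

namespace Stmt17

/-- A monoid `M` is residually finite if distinct elements can be separated by a
homomorphism to a finite monoid. -/
def ResiduallyFinite (M : Type) [Monoid M] : Prop :=
  ∀ x y : M, x ≠ y →
    ∃ (F : Type) (mF : Monoid F)
      (f : @MonoidHom M F (@Monoid.toMulOneClass M _).toMulOne mF.toMulOneClass.toMulOne),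
      Finite F ∧ f x ≠ f y

/-- The generators of the Malcev monoid. -/
inductive X : Type
  | a : X
  | b : X
  | c : X
  | d : X
  | a' : X
  | b' : X
  | c' : X
  | d' : X
  deriving DecidableEq

instance : Fintype X :=
  ⟨{X.a, X.b, X.c, X.d, X.a', X.b', X.c', X.d'}, fun x => by cases x <;> simp⟩

/-- The defining relations of the Malcev monoid:
`ab = cd`, `a'b' = c'd'`, `a'd = c'b`. -/
def malcevRel : FreeMonoid X → FreeMonoid X → Prop :=
  fun u v =>
    (u = FreeMonoid.ofList [X.a, X.b] ∧ v = FreeMonoid.ofList [X.c, X.d]) ∨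
    (u = FreeMonoid.ofList [X.a', X.b'] ∧ v = FreeMonoid.ofList [X.c', X.d']) ∨
    (u = FreeMonoid.ofList [X.a', X.d] ∧ v = FreeMonoid.ofList [X.c', X.b])

/-- The Malcev monoid `⟨a,b,c,d,a',b',c',d' | ab = cd, a'b' = c'd', a'd = c'b⟩`. -/
def MalcevMonoid : Type := (conGen malcevRel).Quotient

instance : Monoid MalcevMonoid := by unfold MalcevMonoid; infer_instance

/-- The length homomorphism on the free monoid. -/
def L : FreeMonoid X →* Multiplicative ℕ :=
  FreeMonoid.lift (fun _ => Multiplicative.ofAdd 1)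

lemma L_apply (l : List X) : (L (FreeMonoid.ofList l)).toAdd = l.length := by
  induction l with
  | nil => rfl
  | cons x xs ih =>
    have : FreeMonoid.ofList (x :: xs) = FreeMonoid.of x * FreeMonoid.ofList xs := rfl
    rw [this, map_mul, toAdd_mul, ih]
    simp [L]
    omega

lemma conGen_le_kerL : conGen malcevRel ≤ Con.ker L := by
  rw [Con.conGen_le]
  rintro u v (⟨hu, hv⟩ | ⟨hu, hv⟩ | ⟨hu, hv⟩) <;> subst hu <;> subst hv <;> rfl

/-- The length homomorphism on the Malcev monoid. -/
def Lbar : MalcevMonoid →* Multiplicative ℕ :=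
  Con.lift _ L conGen_le_kerL

def len (x : MalcevMonoid) : ℕ := (Lbar x).toAdd

lemma len_mul (x y : MalcevMonoid) : len (x * y) = len x + len y := by
  simp [len, map_mul]

lemma len_mk (l : List X) :
    len ((conGen malcevRel).mk' (FreeMonoid.ofList l)) = l.length := by
  show (Lbar _).toAdd = _
  rw [show Lbar ((conGen malcevRel).mk' (FreeMonoid.ofList l)) = L (FreeMonoid.ofList l) from
    Con.lift_mk' _ _]
  exact L_apply l

/-- The truncating congruence: identify all elements of length `> N`. -/
def trunc (N : ℕ) : Con MalcevMonoid where
  r x y := x = y ∨ (N < len x ∧ N < len y)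
  iseqv := by
    constructor
    · intro x; exact Or.inl rfl
    · rintro x y (rfl | ⟨h1, h2⟩); exacts [Or.inl rfl, Or.inr ⟨h2, h1⟩]
    · rintro x y z (rfl | ⟨h1, h2⟩) (rfl | ⟨h3, h4⟩)
      exacts [Or.inl rfl, Or.inr ⟨h3, h4⟩, Or.inr ⟨h1, h2⟩, Or.inr ⟨h1, h4⟩]
  mul' := by
    rintro w x y z (rfl | ⟨h1, h2⟩) (rfl | ⟨h3, h4⟩)
    · exact Or.inl rfl
    · exact Or.inr ⟨by rw [len_mul]; omega, by rw [len_mul]; omega⟩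
    · exact Or.inr ⟨by rw [len_mul]; omega, by rw [len_mul]; omega⟩
    · exact Or.inr ⟨by rw [len_mul]; omega, by rw [len_mul]; omega⟩

lemma trunc_finite (N : ℕ) : Finite (trunc N).Quotient := by
  have hsurj : Function.Surjective
      (fun o : {l : List X // l.length ≤ N + 1} =>
        (trunc N).mk' ((conGen malcevRel).mk' (FreeMonoid.ofList o.1))) := by
    intro q
    induction q using Con.induction_on with
    | H m =>
      induction m using Con.induction_on with
      | H w =>
        by_cases h : (FreeMonoid.toList w).length ≤ N
        · refine ⟨⟨FreeMonoid.toList w, by omega⟩, ?_⟩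
          simp [FreeMonoid.ofList_toList]
        · refine ⟨⟨List.replicate (N + 1) X.a, by simp⟩, ?_⟩
          have h1 : len ((conGen malcevRel).mk'
              (FreeMonoid.ofList (List.replicate (N + 1) X.a))) = N + 1 := by
            rw [len_mk, List.length_replicate]
          have h2 : len ((conGen malcevRel).mk' w) = (FreeMonoid.toList w).length := by
            conv_lhs => rw [← FreeMonoid.ofList_toList w]
            exact len_mk _
          show ((_ : MalcevMonoid) : (trunc N).Quotient) = ((_ : MalcevMonoid) : (trunc N).Quotient)
          refine (trunc N).eq.mpr ?_
          right
          constructor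
          · rw [h1]; omega
          · show N < len ((conGen malcevRel).mk' w)
            rw [h2]; omega
  haveI : Finite {l : List X // l.length ≤ N + 1} :=
    (List.finite_length_le (α := X) (n := N + 1)).to_subtype
  exact Finite.of_surjective _ hsurj


/-- Example `ex-malcev` with Corollary `cor-resid`: the Malcev
monoid is residually finite. -/
theorem malcev_residually_finite : ResiduallyFinite MalcevMonoid := by
  intro x y hxy
  set N := max (len x) (len y) with hN
  refine ⟨(trunc N).Quotient, inferInstance, (trunc N).mk', trunc_finite N, ?_⟩
  intro h
  have h' : trunc N x y := ((trunc N).eq).mp h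
  rcases h' with rfl | ⟨h1, h2⟩
  · exact hxy rfl
  · omega


end Stmt17
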